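/- Let H be a real Hilbert space, K a nonempty convex subset of H, g : H → H a map whose range contains K (for every x ∈ K there exists w ∈ H with g w = x), p > 1, μ > 0, and F : H → ℝ Fréchet differentiable. Assume ∇F is higher order strongly relaxed pseudomonotone on K: for all x, y ∈ K, ⟨∇F(x), y − x⟩ ≥ 0 implies ⟨∇F(y), y − x⟩ ≥ μ·‖y − x‖^p. Then F is higher order strongly pseudoconvex: for all u, v ∈ H with g u, g v ∈ K, if ⟨∇F(g u), g v − g u⟩ ≥ 0 then F(g v) − F(g u) ≥ (μ/p)·‖g v − g u‖^p. -/

import Mathlib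

open scoped RealInnerProductSpace

theorem stmt_11 {H : Type*} [NormedAddCommGroup H] [InnerProductSpace ℝ H] [CompleteSpace H]
    (K : Set H) (hK : K.Nonempty) (hKconv : Convex ℝ K)
    (g : H → H) (hg : ∀ x ∈ K, ∃ w : H, g w = x)
    (p μ : ℝ) (hp : 1 < p) (hμ : 0 < μ)
    (F : H → ℝ) (F' : H → H) (hF : ∀ x : H, HasGradientAt F (F' x) x)
    (hpm : ∀ x ∈ K, ∀ y ∈ K,
      0 ≤ ⟪F' x, y - x⟫ → μ * ‖y - x‖ ^ p ≤ ⟪F' y, y - x⟫) :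
    ∀ u v : H, g u ∈ K → g v ∈ K → 0 ≤ ⟪F' (g u), g v - g u⟫ →
      (μ / p) * ‖g v - g u‖ ^ p ≤ F (g v) - F (g u) := by
  intro u v hu hv h0
  set x := g u with hx
  set y := g v with hy
  set c : ℝ := ‖y - x‖ ^ p with hc
  have hp0 : (0:ℝ) < p := lt_trans one_pos hp
  have hcnn : 0 ≤ c := Real.rpow_nonneg (norm_nonneg _) p
  -- the line and its derivative
  have hline : ∀ t : ℝ, HasDerivAt (fun t : ℝ => x + t • (y - x)) (y - x) t := by
    intro t
    simpa using ((hasDerivAt_id t).smul_const (y - x)).const_add x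
  have hφ : ∀ t : ℝ, HasDerivAt (fun t : ℝ => F (x + t • (y - x)))
      ⟪F' (x + t • (y - x)), y - x⟫ t := by
    intro t
    have hFd := (hasGradientAt_iff_hasFDerivAt.mp (hF (x + t • (y - x))))
    have := hFd.comp_hasDerivAt t (hline t)
    simpa [InnerProductSpace.toDual_apply_apply, Function.comp_def] using this
  -- ψ and its derivative
  set ψ : ℝ → ℝ := fun t => F (x + t • (y - x)) - (μ / p) * t ^ p * c with hψ
  have hψ' : ∀ t : ℝ, HasDerivAt ψ
      (⟪F' (x + t • (y - x)), y - x⟫ - (μ / p) * (p * t ^ (p - 1)) * c) t := by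
    intro t
    have h1 : HasDerivAt (fun t : ℝ => (μ / p) * t ^ p * c)
        ((μ / p) * (p * t ^ (p - 1)) * c) t := by
      exact ((Real.hasDerivAt_rpow_const (Or.inr hp.le)).const_mul (μ / p)).mul_const c
    exact (hφ t).sub h1
  -- derivative nonneg on (0,1)
  have hderiv_nonneg : ∀ t ∈ Set.Ioo (0:ℝ) 1, 0 ≤ deriv ψ t := by
    intro t ht
    rw [(hψ' t).deriv]
    obtain ⟨ht0, ht1⟩ := ht
    set z := x + t • (y - x) with hz
    have hzK : z ∈ K := by
      have := hKconv hu hv (by linarith : (0:ℝ) ≤ 1 - t) ht0.le (by ring)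
      have hzeq : z = (1 - t) • x + t • y := by
        rw [hz]; module
      rwa [hzeq]
    have hzx : z - x = t • (y - x) := by rw [hz]; abel
    have h1 : 0 ≤ ⟪F' x, z - x⟫ := by
      rw [hzx, real_inner_smul_right]
      exact mul_nonneg ht0.le h0
    have h2 := hpm x hu z hzK h1
    have hnorm : ‖z - x‖ ^ p = t ^ p * c := by
      rw [hzx, norm_smul, Real.norm_eq_abs, abs_of_pos ht0,
        Real.mul_rpow ht0.le (norm_nonneg _)]
    rw [hnorm, hzx, real_inner_smul_right] at h2
    -- h2 : μ * (t ^ p * c) ≤ t * ⟪F' z, y - x⟫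
    have htp : t ^ p = t * t ^ (p - 1) := by
      nth_rewrite 1 [show p = 1 + (p - 1) by ring]
      rw [Real.rpow_add ht0, Real.rpow_one]
    have key : μ * t ^ (p - 1) * c ≤ ⟪F' z, y - x⟫ := by
      have h3 : t * (μ * t ^ (p - 1) * c) ≤ t * ⟪F' z, y - x⟫ := by
        calc t * (μ * t ^ (p - 1) * c) = μ * (t ^ p * c) := by rw [htp]; ring
        _ ≤ t * ⟪F' z, y - x⟫ := h2
      exact le_of_mul_le_mul_left h3 ht0
    have hμp : (μ / p) * (p * t ^ (p - 1)) * c = μ * t ^ (p - 1) * c := by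
      field_simp
    rw [hμp]
    linarith
  -- ψ monotone on [0,1]
  have hcont : ContinuousOn ψ (Set.Icc 0 1) :=
    fun t _ => ((hψ' t).continuousAt).continuousWithinAt
  have hdiff : DifferentiableOn ℝ ψ (interior (Set.Icc (0:ℝ) 1)) :=
    fun t _ => ((hψ' t).differentiableAt).differentiableWithinAt
  have hmono : MonotoneOn ψ (Set.Icc 0 1) := by
    apply monotoneOn_of_deriv_nonneg (convex_Icc 0 1) hcont hdiff
    intro t ht
    rw [interior_Icc] at ht
    exact hderiv_nonneg t ht
  have h01 := hmono (Set.left_mem_Icc.mpr zero_le_one) (Set.right_mem_Icc.mpr zero_le_one)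
    zero_le_one
  have hψ0 : ψ 0 = F x := by
    simp [hψ, Real.zero_rpow (ne_of_gt hp0)]
  have hψ1 : ψ 1 = F y - (μ / p) * c := by
    simp [hψ, Real.one_rpow]
  rw [hψ0, hψ1] at h01
  linarith
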